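/- Let K > 0 be a constant such that every finite hypergraph (V,E) with |V| < |E| has discrepancy at most K·√(|V|·ln(|E|/|V|)). Then for every even n and every s ≥ 1, any proper F-coloring of the generalized Kneser graph K(n, n/2, s) using q > n Frankl sets satisfies q ≥ n·exp(s²/(K²·n)). -/

import Mathlib

lemma sum_pm {n : ℕ} (d : Fin n → ℤ) (hd : ∀ x, d x = 1 ∨ d x = -1)
    (e : Finset (Fin n)) :
    (∑ x ∈ e, d x) = 2 * ((e.filter (fun x => d x = 1)).card : ℤ) - e.card := by
  classical
  have hsplit := Finset.sum_filter_add_sum_filter_not e (fun x => d x = 1) d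
  have h1 : ∑ x ∈ e.filter (fun x => d x = 1), d x
      = ((e.filter (fun x => d x = 1)).card : ℤ) := by
    rw [Finset.sum_congr rfl (fun x hx => (Finset.mem_filter.mp hx).2)]
    simp
  have h2 : ∑ x ∈ e.filter (fun x => ¬ d x = 1), d x
      = -((e.filter (fun x => ¬ d x = 1)).card : ℤ) := by
    rw [Finset.sum_congr rfl (fun x hx => show d x = -1 from ?_)]
    · simp
    · rcases hd x with h | h
      · exact absurd h (Finset.mem_filter.mp hx).2
      · exact h
  have hcard := Finset.card_filter_add_card_filter_not
    (s := e) (p := fun x => d x = 1)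
  rw [h1, h2] at hsplit
  have : ((e.filter (fun x => d x = 1)).card : ℤ)
      + ((e.filter (fun x => ¬ d x = 1)).card : ℤ) = (e.card : ℤ) := by
    exact_mod_cast hcard
  linarith [hsplit, this]

lemma frankl_aux {n s : ℕ} {𝒜 : Finset (Finset (Fin n))} {B : ℝ}
    (hcover : ∀ v : Finset (Fin n), v.card = n / 2 →
      ∃ A ∈ 𝒜, A.card + s ≤ 2 * (v ∩ A).card)
    (d : Fin n → ℤ) (hd : ∀ x, d x = 1 ∨ d x = -1)
    (hP : n / 2 ≤ (Finset.univ.filter (fun x => d x = 1)).card)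
    (hbound : ∀ e ∈ 𝒜, |((∑ x ∈ e, d x : ℤ) : ℝ)| ≤ B) :
    (s : ℝ) ≤ B := by
  classical
  obtain ⟨v, hvsub, hvcard⟩ := Finset.exists_subset_card_eq hP
  obtain ⟨A, hA𝒜, hA⟩ := hcover v hvcard
  have hsum := sum_pm d hd A
  have hint : (v ∩ A).card ≤ (A.filter (fun x => d x = 1)).card := by
    apply Finset.card_le_card
    intro x hx
    rw [Finset.mem_inter] at hx
    exact Finset.mem_filter.mpr ⟨hx.2, (Finset.mem_filter.mp (hvsub hx.1)).2⟩
  have hsle : (s : ℤ) ≤ ∑ x ∈ A, d x := by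
    rw [hsum]
    have : (A.card : ℤ) + s ≤ 2 * ((v ∩ A).card : ℤ) := by exact_mod_cast hA
    have h2 : ((v ∩ A).card : ℤ) ≤ ((A.filter (fun x => d x = 1)).card : ℤ) := by
      exact_mod_cast hint
    linarith
  have : (s : ℝ) ≤ ((∑ x ∈ A, d x : ℤ) : ℝ) := by exact_mod_cast hsle
  calc (s : ℝ) ≤ |((∑ x ∈ A, d x : ℤ) : ℝ)| := this.trans (le_abs_self _)
    _ ≤ B := hbound A hA𝒜

/-- Suppose `K > 0` is a constant such that every finite hypergraph `(V, E)` with `|V| < |E|`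
has discrepancy at most `K·√(|V|·ln(|E|/|V|))`.  Then for every even `n` and `s ≥ 1`, any
proper F-coloring of the generalized Kneser graph `K(n, n/2, s)` using `q > n` Frankl sets
satisfies `q ≥ n·exp(s²/(K²·n))`. -/
theorem fChromatic_lower_log (K : ℝ) (hK : 0 < K)
    (hdisc : ∀ (N : ℕ) (E : Finset (Finset (Fin N))), N < E.card →
      ∃ c : Fin N → ℤ, (∀ x, c x = 1 ∨ c x = -1) ∧
        ∀ e ∈ E, |((∑ x ∈ e, c x : ℤ) : ℝ)| ≤
          K * Real.sqrt ((N : ℝ) * Real.log ((E.card : ℝ) / (N : ℝ))))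
    (n s : ℕ) (hn : Even n) (hs : 1 ≤ s)
    (𝒜 : Finset (Finset (Fin n))) (hq : n < 𝒜.card)
    (h𝒜 : ∀ A ∈ 𝒜, s ≤ A.card)
    (hcover : ∀ v : Finset (Fin n), v.card = n / 2 →
      ∃ A ∈ 𝒜, A.card + s ≤ 2 * (v ∩ A).card) :
    (n : ℝ) * Real.exp ((s : ℝ) ^ 2 / (K ^ 2 * (n : ℝ))) ≤ (𝒜.card : ℝ) := by
  classical
  rcases Nat.eq_zero_or_pos n with h0 | hnpos
  · subst h0
    simp only [Nat.cast_zero, zero_mul]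
    positivity
  obtain ⟨c, hc1, hc2⟩ := hdisc n 𝒜 hq
  set B := K * Real.sqrt ((n : ℝ) * Real.log ((𝒜.card : ℝ) / (n : ℝ))) with hB
  have key : (s : ℝ) ≤ B := by
    by_cases hP : n / 2 ≤ (Finset.univ.filter (fun x => c x = 1)).card
    · exact frankl_aux hcover c hc1 hP hc2
    · refine frankl_aux hcover (fun x => -c x) (fun x => ?_) ?_ ?_
      · rcases hc1 x with h | h
        · right; simp [h]
        · left; simp [h]
      · have hcardsum := Finset.card_filter_add_card_filter_not
          (s := (Finset.univ : Finset (Fin n))) (p := fun x => c x = 1)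
        have hcardu : (Finset.univ : Finset (Fin n)).card = n := by simp
        have heq : (Finset.univ.filter (fun x => ¬ c x = 1))
            = Finset.univ.filter (fun x => -c x = 1) := by
          apply Finset.filter_congr
          intro x _
          rcases hc1 x with h | h <;> simp [h]
        rw [heq, hcardu] at hcardsum
        show n / 2 ≤ (Finset.univ.filter (fun x => -c x = 1)).card
        omega
      · intro e he
        have : (∑ x ∈ e, -c x) = -(∑ x ∈ e, c x) := by
          rw [Finset.sum_neg_distrib]
        rw [this, Int.cast_neg, abs_neg]
        exact hc2 e he
  -- analytic end
  have hn1 : (1 : ℝ) ≤ (n : ℝ) := by exact_mod_cast hnpos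
  have hnR : (0 : ℝ) < (n : ℝ) := by linarith
  have hqn : (n : ℝ) < (𝒜.card : ℝ) := by exact_mod_cast hq
  have hratio : (1 : ℝ) ≤ (𝒜.card : ℝ) / (n : ℝ) := by
    rw [le_div_iff₀ hnR]; linarith
  have hL : 0 ≤ Real.log ((𝒜.card : ℝ) / (n : ℝ)) := Real.log_nonneg hratio
  have hs0 : (0 : ℝ) ≤ (s : ℝ) := by positivity
  have hsq : (s : ℝ) ^ 2 ≤ K ^ 2 * ((n : ℝ) * Real.log ((𝒜.card : ℝ) / (n : ℝ))) := by
    have h1 : (s : ℝ) ^ 2 ≤ B ^ 2 := by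
      apply sq_le_sq' _ key
      linarith [key, hs0]
    rw [hB, mul_pow, Real.sq_sqrt (by positivity)] at h1
    exact h1
  have hdiv : (s : ℝ) ^ 2 / (K ^ 2 * (n : ℝ)) ≤ Real.log ((𝒜.card : ℝ) / (n : ℝ)) := by
    rw [div_le_iff₀ (by positivity)]
    calc (s : ℝ) ^ 2 ≤ K ^ 2 * ((n : ℝ) * Real.log ((𝒜.card : ℝ) / (n : ℝ))) := hsq
      _ = Real.log ((𝒜.card : ℝ) / (n : ℝ)) * (K ^ 2 * (n : ℝ)) := by ring
  have := Real.exp_le_exp.mpr hdiv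
  rw [Real.exp_log (by positivity)] at this
  calc (n : ℝ) * Real.exp ((s : ℝ) ^ 2 / (K ^ 2 * (n : ℝ)))
      ≤ (n : ℝ) * ((𝒜.card : ℝ) / (n : ℝ)) := by
        exact mul_le_mul_of_nonneg_left this (le_of_lt hnR)
    _ = (𝒜.card : ℝ) := by field_simp
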